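/- arXiv:2108.04959 — 4 statements merged into one kernel-verified Lean document; each statement's English description precedes it below -/
import Mathlib

section
/- Let f : [0,1] → 2^[0,1] be upper semicontinuous, light, almost nonfissile, with the intermediate value property. If D ⊆ [0,1] is open and G ⊆ D is a G_δ subset of [0,1] contained in D, then {x ∈ [0,1] : f(x) ⊆ G} is a G_δ subset of [0,1]. Moreover, if G is dense in D, then {x : f(x) ⊆ G} is dense in {x : f(x) ⊆ D}. -/
open Set Filter Topology

/-- The graph of a set-valued function on `[0,1]`. -/
def SVGraph (f : ℝ → Set ℝ) : Set (ℝ × ℝ) :=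
  {p | p.1 ∈ Icc (0:ℝ) 1 ∧ p.2 ∈ f p.1}

/-- Upper semicontinuous set-valued function `[0,1] → 2^[0,1]`:
nonempty compact values inside `[0,1]` and closed graph. -/
def USC (f : ℝ → Set ℝ) : Prop :=
  (∀ x ∈ Icc (0:ℝ) 1, (f x).Nonempty ∧ f x ⊆ Icc (0:ℝ) 1 ∧ IsCompact (f x)) ∧
    IsClosed (SVGraph f)

/-- The intermediate value property. -/
def IVP (f : ℝ → Set ℝ) : Prop :=
  ∀ x₁ ∈ Icc (0:ℝ) 1, ∀ x₂ ∈ Icc (0:ℝ) 1, x₁ ≠ x₂ →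
    ∀ y₁ ∈ f x₁, ∀ y₂ ∈ f x₂, y₁ ≠ y₂ →
      ∀ y ∈ Ioo (min y₁ y₂) (max y₁ y₂),
        ∃ x ∈ Ioo (min x₁ x₂) (max x₁ x₂), y ∈ f x

/-- The weak intermediate value property. -/
def WIVP (f : ℝ → Set ℝ) : Prop :=
  ∀ x₁ ∈ Icc (0:ℝ) 1, ∀ x₂ ∈ Icc (0:ℝ) 1, x₁ ≠ x₂ →
    ∀ y₁ ∈ f x₁, ∃ y₂ ∈ f x₂,
      ∀ y ∈ Icc (min y₁ y₂) (max y₁ y₂),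
        ∃ x ∈ Icc (min x₁ x₂) (max x₁ x₂), y ∈ f x

/-- Weak continuity (from the left and the right) at each interior point. -/
def WeakCont (f : ℝ → Set ℝ) : Prop :=
  ∀ x ∈ Ioo (0:ℝ) 1, ∀ y ∈ f x,
    (∃ u : ℕ → ℝ × ℝ, (∀ k, u k ∈ SVGraph f ∧ (u k).1 < x) ∧
      Tendsto u atTop (𝓝 (x, y))) ∧
    (∃ u : ℕ → ℝ × ℝ, (∀ k, u k ∈ SVGraph f ∧ x < (u k).1) ∧
      Tendsto u atTop (𝓝 (x, y)))

/-- `f` is almost nonfissile: the nonfissile points of the graph are dense in the graph. -/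
def AlmostNonfissile (f : ℝ → Set ℝ) : Prop :=
  SVGraph f ⊆ closure {p | p ∈ SVGraph f ∧ f p.1 = {p.2}}

/-- `f` is light: each fiber `{x : y ∈ f x}` has empty interior in `[0,1]`. -/
def Light (f : ℝ → Set ℝ) : Prop :=
  ∀ y : ℝ, ∀ U : Set ℝ, IsOpen U → (U ∩ Icc (0:ℝ) 1).Nonempty →
    ∃ x ∈ U ∩ Icc (0:ℝ) 1, y ∉ f x

/-- `f` is surjective onto `[0,1]`. -/
def Surj (f : ℝ → Set ℝ) : Prop :=
  ∀ y ∈ Icc (0:ℝ) 1, ∃ x ∈ Icc (0:ℝ) 1, y ∈ f x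

/-- The `n`-fold set-valued composition of `f`. -/
def fIter (f : ℝ → Set ℝ) : ℕ → ℝ → Set ℝ
  | 0, x => {x}
  | n + 1, x => ⋃ z ∈ fIter f n x, f z

/-- The image `f^n[A] = ⋃_{a ∈ A} f^n(a)`. -/
def imIter (f : ℝ → Set ℝ) (n : ℕ) (A : Set ℝ) : Set ℝ :=
  ⋃ a ∈ A, fIter f n a

/-- The inverse limit of the single bonding function `f` on `[0,1]`. -/
def InvLim (f : ℝ → Set ℝ) : Set (ℕ → ℝ) :=
  {z | (∀ i, z i ∈ Icc (0:ℝ) 1) ∧ ∀ i, z i ∈ f (z (i + 1))}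

/-- `X` is irreducible between `x` and `y`: the only subcontinuum of `X`
containing both is `X` itself. -/
def IrreducibleBetween (X : Set (ℕ → ℝ)) (x y : ℕ → ℝ) : Prop :=
  x ∈ X ∧ y ∈ X ∧
    ∀ K ⊆ X, IsCompact K → IsConnected K → x ∈ K → y ∈ K → K = X


lemma graph_compact (f : ℝ → Set ℝ) (hf : USC f) : IsCompact (SVGraph f) := by
  apply IsCompact.of_isClosed_subset (isCompact_Icc.prod isCompact_Icc) hf.2
  rintro ⟨x, y⟩ ⟨hx, hy⟩
  exact ⟨hx, (hf.1 x hx).2.1 hy⟩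

lemma open_sub (f : ℝ → Set ℝ) (hf : USC f) (V : Set ℝ) (hV : IsOpen V) :
    ∃ U₀ : Set ℝ, IsOpen U₀ ∧ ∀ x ∈ Icc (0:ℝ) 1, (f x ⊆ V ↔ x ∈ U₀) := by
  set K := SVGraph f ∩ ((univ : Set ℝ) ×ˢ Vᶜ) with hKdef
  have hK : IsCompact K :=
    (graph_compact f hf).inter_right (isClosed_univ.prod hV.isClosed_compl)
  have hKc : IsCompact (Prod.fst '' K) := hK.image continuous_fst
  refine ⟨(Prod.fst '' K)ᶜ, hKc.isClosed.isOpen_compl, ?_⟩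
  intro x hx
  constructor
  · rintro hsub ⟨⟨x', y⟩, ⟨⟨_, hyf⟩, _, hyV⟩, rfl⟩
    exact hyV (hsub hyf)
  · intro hxU y hy
    by_contra hyV
    exact hxU ⟨(x, y), ⟨⟨hx, hy⟩, trivial, hyV⟩, rfl⟩

lemma core (f : ℝ → Set ℝ) (hf : USC f) (hl : Light f)
    (hanf : AlmostNonfissile f) (hivp : IVP f)
    (U : Set ℝ) (hU : IsOpen U) (V : Set ℝ) (hV : IsOpen V)
    (hdense : U ∩ Icc (0:ℝ) 1 ⊆ closure (V ∩ (U ∩ Icc (0:ℝ) 1)))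
    (O : Set ℝ) (hO : IsOpen O) (hOne : O.Nonempty) (hOI : O ⊆ Icc (0:ℝ) 1)
    (hOD : ∀ x ∈ O, f x ⊆ U ∩ Icc (0:ℝ) 1) :
    ∃ x ∈ O, f x ⊆ V := by
  obtain ⟨x₀, hx₀⟩ := hOne
  obtain ⟨y₀, hy₀⟩ := (hf.1 x₀ (hOI hx₀)).1
  have hg : (x₀, y₀) ∈ SVGraph f := ⟨hOI hx₀, hy₀⟩
  have h1 := hanf hg
  rw [mem_closure_iff] at h1
  obtain ⟨p, hpO, hpG, hpfix⟩ :=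
    h1 (O ×ˢ (univ : Set ℝ)) (hO.prod isOpen_univ) ⟨hx₀, trivial⟩
  obtain ⟨x₁, y₁⟩ := p
  have hx₁O : x₁ ∈ O := hpO.1
  have hx₁I : x₁ ∈ Icc (0:ℝ) 1 := hOI hx₁O
  have hfx₁ : f x₁ = {y₁} := hpfix
  have hy₁ : y₁ ∈ f x₁ := by rw [hfx₁]; exact rfl
  have hy₁D : y₁ ∈ U ∩ Icc (0:ℝ) 1 := hOD x₁ hx₁O hy₁
  by_cases hy₁V : y₁ ∈ V
  · exact ⟨x₁, hx₁O, by rw [hfx₁]; exact singleton_subset_iff.2 hy₁V⟩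
  obtain ⟨δ, hδ, hδU⟩ := Metric.isOpen_iff.1 hU y₁ hy₁D.1
  obtain ⟨U₁, hU₁o, hU₁⟩ := open_sub f hf (Metric.ball y₁ δ) Metric.isOpen_ball
  have hx₁U₁ : x₁ ∈ U₁ := (hU₁ x₁ hx₁I).1
    (by rw [hfx₁]; exact singleton_subset_iff.2 (Metric.mem_ball_self hδ))
  obtain ⟨η, hη, hηsub⟩ := Metric.isOpen_iff.1 (hU₁o.inter hO) x₁ ⟨hx₁U₁, hx₁O⟩
  obtain ⟨x₂, hx₂, hy₁notf⟩ := hl y₁ (Metric.ball x₁ η) Metric.isOpen_ball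
    ⟨x₁, Metric.mem_ball_self hη, hx₁I⟩
  have hx₂s := hηsub hx₂.1
  have hx₂O : x₂ ∈ O := hx₂s.2
  have hfx₂ : f x₂ ⊆ Metric.ball y₁ δ := (hU₁ x₂ hx₂.2).2 hx₂s.1
  obtain ⟨y₂, hy₂⟩ := (hf.1 x₂ hx₂.2).1
  have hy₂δ : y₂ ∈ Metric.ball y₁ δ := hfx₂ hy₂
  have hxne : x₁ ≠ x₂ := fun h => hy₁notf (h ▸ hy₁)
  have hyne : y₁ ≠ y₂ := fun h => hy₁notf (h ▸ hy₂)
  have hy₁I : y₁ ∈ Icc (0:ℝ) 1 := hy₁D.2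
  have hy₂I : y₂ ∈ Icc (0:ℝ) 1 := (hf.1 x₂ hx₂.2).2.1 hy₂
  have hy₂abs : |y₂ - y₁| < δ := by
    rw [Metric.mem_ball, Real.dist_eq] at hy₂δ; exact hy₂δ
  rw [abs_sub_lt_iff] at hy₂abs
  have hMsub : Ioo (min y₁ y₂) (max y₁ y₂) ⊆ U ∩ Icc (0:ℝ) 1 := by
    intro y hy
    have h1 : min y₁ y₂ < y := hy.1
    have h2 : y < max y₁ y₂ := hy.2
    have h3 : y₁ - δ < min y₁ y₂ := lt_min (by linarith) (by linarith [hy₂abs.2])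
    have h4 : max y₁ y₂ < y₁ + δ := max_lt (by linarith) (by linarith [hy₂abs.1])
    refine ⟨hδU ?_, ?_⟩
    · rw [Metric.mem_ball, Real.dist_eq, abs_sub_lt_iff]
      constructor <;> linarith
    · constructor
      · have : (0:ℝ) ≤ min y₁ y₂ := le_min hy₁I.1 hy₂I.1
        linarith
      · have : max y₁ y₂ ≤ 1 := max_le hy₁I.2 hy₂I.2
        linarith
  have hMne : (Ioo (min y₁ y₂) (max y₁ y₂)).Nonempty :=
    nonempty_Ioo.2 (min_lt_max.2 hyne)
  obtain ⟨m, hm⟩ := hMne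
  have hmcl := hdense (hMsub hm)
  rw [mem_closure_iff] at hmcl
  obtain ⟨w, hwM, hwV, hwD⟩ := hmcl _ isOpen_Ioo hm
  obtain ⟨x₃, hx₃, hwf⟩ := hivp x₁ hx₁I x₂ hx₂.2 hxne y₁ hy₁ y₂ hy₂ hyne w hwM
  have hx₂abs : |x₂ - x₁| < η := by
    have := hx₂.1; rw [Metric.mem_ball, Real.dist_eq] at this; exact this
  rw [abs_sub_lt_iff] at hx₂abs
  have hIooO : Ioo (min x₁ x₂) (max x₁ x₂) ⊆ O := by
    intro x hx
    have h3 : x₁ - η < min x₁ x₂ := lt_min (by linarith) (by linarith [hx₂abs.2])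
    have h4 : max x₁ x₂ < x₁ + η := max_lt (by linarith) (by linarith [hx₂abs.1])
    have : x ∈ Metric.ball x₁ η := by
      rw [Metric.mem_ball, Real.dist_eq, abs_sub_lt_iff]
      have := hx.1; have := hx.2
      constructor <;> linarith
    exact (hηsub this).2
  have hg₃ : (x₃, w) ∈ SVGraph f := ⟨hOI (hIooO hx₃), hwf⟩
  have h2 := hanf hg₃
  rw [mem_closure_iff] at h2
  obtain ⟨q, hqO, hqG, hqfix⟩ :=
    h2 ((Ioo (min x₁ x₂) (max x₁ x₂)) ×ˢ V) (isOpen_Ioo.prod hV) ⟨hx₃, hwV⟩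
  exact ⟨q.1, hIooO hqO.1, by rw [hqfix]; exact singleton_subset_iff.2 hqO.2⟩

/-- `{x : f(x) ⊆ G}` is Gδ, and dense in `{x : f(x) ⊆ D}` when `G` is dense in `D`. -/
theorem stmt7 (f : ℝ → Set ℝ) (hf : USC f) (hl : Light f)
    (hanf : AlmostNonfissile f) (hivp : IVP f)
    (D : Set ℝ) (hD : ∃ U : Set ℝ, IsOpen U ∧ D = U ∩ Icc (0:ℝ) 1)
    (G : Set ℝ) (hG : IsGδ G) (hGD : G ⊆ D) :
    IsGδ {x : ℝ | x ∈ Icc (0:ℝ) 1 ∧ f x ⊆ G} ∧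
      (D ⊆ closure G →
        {x : ℝ | x ∈ Icc (0:ℝ) 1 ∧ f x ⊆ D} ⊆
          closure {x : ℝ | x ∈ Icc (0:ℝ) 1 ∧ f x ⊆ G}) := by
  obtain ⟨U, hUo, rfl⟩ := hD
  obtain ⟨T, hTo, hTc, rfl⟩ := hG
  haveI := hTc.to_subtype
  have hchoice : ∀ V : T, ∃ U₀ : Set ℝ, IsOpen U₀ ∧
      ∀ x ∈ Icc (0:ℝ) 1, (f x ⊆ (V : Set ℝ) ↔ x ∈ U₀) :=
    fun V => open_sub f hf V (hTo V V.2)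
  choose W hWo hWiff using hchoice
  constructor
  · have hEq : {x : ℝ | x ∈ Icc (0:ℝ) 1 ∧ f x ⊆ ⋂₀ T} =
        Icc (0:ℝ) 1 ∩ ⋂ V : T, W V := by
      ext x
      simp only [mem_setOf_eq, mem_inter_iff, mem_iInter, subset_sInter_iff]
      constructor
      · rintro ⟨hx, hsub⟩
        exact ⟨hx, fun V => (hWiff V x hx).1 (hsub V V.2)⟩
      · rintro ⟨hx, hsub⟩
        exact ⟨hx, fun V hV => (hWiff ⟨V, hV⟩ x hx).2 (hsub ⟨V, hV⟩)⟩
    rw [hEq]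
    exact isClosed_Icc.isGδ.inter (IsGδ.iInter fun V => (hWo V).isGδ)
  · intro hdense x₀ hx₀
    obtain ⟨hx₀I, hx₀D⟩ := hx₀
    rw [mem_closure_iff]
    intro o ho hx₀o
    obtain ⟨Ud, hUdo, hUdiff⟩ := open_sub f hf U hUo
    have hx₀Ud : x₀ ∈ Ud := (hUdiff x₀ hx₀I).1 fun y hy => (hx₀D hy).1
    obtain ⟨r, hr, hrsub⟩ := Metric.isOpen_iff.1 (hUdo.inter ho) x₀ ⟨hx₀Ud, hx₀o⟩
    set a : ℝ := max 0 (x₀ - r / 2) with ha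
    set b : ℝ := min 1 (x₀ + r / 2) with hb
    have hab : a < b := by
      have h1 := hx₀I.1; have h2 := hx₀I.2
      rw [ha, hb, max_lt_iff, lt_min_iff, lt_min_iff]
      refine ⟨⟨by norm_num, by linarith⟩, by linarith, by linarith⟩
    have hIoo_ball : Ioo a b ⊆ Metric.ball x₀ r := by
      intro x hx
      have h1 : x₀ - r / 2 ≤ a := le_max_right _ _
      have h2 : b ≤ x₀ + r / 2 := min_le_right _ _
      have h3 := hx.1; have h4 := hx.2
      rw [Metric.mem_ball, Real.dist_eq, abs_sub_lt_iff]
      constructor <;> linarith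
    have hIccsub : Ioo a b ⊆ Icc (0:ℝ) 1 := fun x hx =>
      ⟨le_of_lt (lt_of_le_of_lt (le_max_left _ _) hx.1),
       le_of_lt (lt_of_lt_of_le hx.2 (min_le_left _ _))⟩
    have hfD : ∀ x ∈ Ioo a b, f x ⊆ U ∩ Icc (0:ℝ) 1 := by
      intro x hx y hy
      have hxU : x ∈ Ud := (hrsub (hIoo_ball hx)).1
      exact ⟨(hUdiff x (hIccsub hx)).2 hxU hy,
        (hf.1 x (hIccsub hx)).2.1 hy⟩
    set B : T → Set ℝ := fun V => W V ∪ (Icc a b)ᶜ with hB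
    have hBo : ∀ V, IsOpen (B V) := fun V =>
      (hWo V).union isClosed_Icc.isOpen_compl
    have hBd : ∀ V, Dense (B V) := by
      intro V
      rw [dense_iff_inter_open]
      intro Oo hOo hOone
      by_cases hcase : (Oo ∩ (Icc a b)ᶜ).Nonempty
      · obtain ⟨p, hp⟩ := hcase
        exact ⟨p, hp.1, Or.inr hp.2⟩
      · have hOsub : Oo ⊆ Icc a b := fun p hp => by
          by_contra h; exact hcase ⟨p, hp, h⟩
        have hOsub' : Oo ⊆ Ioo a b := by
          rw [← interior_Icc]; exact interior_maximal hOsub hOo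
        have hvdense : U ∩ Icc (0:ℝ) 1 ⊆
            closure ((V : Set ℝ) ∩ (U ∩ Icc (0:ℝ) 1)) := by
          refine subset_trans hdense (closure_mono fun y hy => ?_)
          exact ⟨sInter_subset_of_mem V.2 hy, hGD hy⟩
        obtain ⟨x, hxO, hxV⟩ := core f hf hl hanf hivp U hUo V (hTo V V.2)
          hvdense Oo hOo hOone (fun x hx => hIccsub (hOsub' hx))
          (fun x hx => hfD x (hOsub' hx))
        exact ⟨x, hxO, Or.inl ((hWiff V x (hIccsub (hOsub' hxO))).1 hxV)⟩
    have hDense : Dense (⋂ V : T, B V) := dense_iInter_of_isOpen hBo hBd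
    obtain ⟨x, hxB, hxIoo⟩ :=
      hDense.exists_mem_open isOpen_Ioo (nonempty_Ioo.2 hab)
    rw [mem_iInter] at hxB
    refine ⟨x, (hrsub (hIoo_ball hxIoo)).2, hIccsub hxIoo, ?_⟩
    rw [subset_sInter_iff]
    intro V hV
    rcases hxB ⟨V, hV⟩ with h | h
    · exact (hWiff ⟨V, hV⟩ x (hIccsub hxIoo)).2 h
    · exact absurd (Ioo_subset_Icc_self hxIoo) h
end

section
/- Let f : [0,1] → 2^[0,1] be a surjective, almost nonfissile, upper semicontinuous map with the intermediate value property, and let x be an interior point of [0,1] at which f(x) is a nondegenerate interval [a,b] with a < b. Then there exists a sequence L₁, L₂, … of nondegenerate closed subintervals of [0,1] such that every point of each Lₙ is strictly less than x, Lₙ converges to {x} in the Hausdorff metric, and f[Lₙ] converges to f(x) in the Hausdorff metric. -/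
open Set Filter Topology

/-- Quantitative upper semicontinuity from the closed graph and compact range. -/
lemma usc_est (f : ℝ → Set ℝ) (hf : USC f) (x : ℝ) (hx : x ∈ Icc (0:ℝ) 1)
    (ε : ℝ) (hε : 0 < ε) :
    ∃ δ > 0, ∀ t ∈ Icc (0:ℝ) 1, |t - x| < δ → ∀ s ∈ f t, ∃ y ∈ f x, dist s y ≤ ε := by
  by_contra h
  push_neg at h
  have H : ∀ n : ℕ, ∃ t ∈ Icc (0:ℝ) 1, |t - x| < 1/(n+1) ∧
      ∃ s ∈ f t, ∀ y ∈ f x, ε < dist s y := by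
    intro n
    obtain ⟨t, ht, htx, s, hs, hfar⟩ := h (1/(n+1)) (by positivity)
    exact ⟨t, ht, htx, s, hs, hfar⟩
  choose t ht htx s hs hfar using H
  have hs01 : ∀ n, s n ∈ Icc (0:ℝ) 1 := fun n => (hf.1 (t n) (ht n)).2.1 (hs n)
  obtain ⟨sl, _, φ, hφ, hconv⟩ := isCompact_Icc.tendsto_subseq hs01
  have htt : Tendsto t atTop (𝓝 x) := by
    rw [tendsto_iff_dist_tendsto_zero]
    apply squeeze_zero (fun n => dist_nonneg) (fun n => ?_)
      tendsto_one_div_add_atTop_nhds_zero_nat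
    exact le_of_lt (by simpa [Real.dist_eq] using htx n)
  have hpt : Tendsto (fun n => (t (φ n), s (φ n))) atTop (𝓝 (x, sl)) :=
    (htt.comp hφ.tendsto_atTop).prodMk_nhds hconv
  have hmem : (x, sl) ∈ SVGraph f :=
    hf.2.mem_of_tendsto hpt (Filter.Eventually.of_forall fun n => ⟨ht (φ n), hs (φ n)⟩)
  have hsl : sl ∈ f x := hmem.2
  have h0 : Tendsto (fun n => dist (s (φ n)) sl) atTop (𝓝 0) :=
    tendsto_iff_dist_tendsto_zero.1 hconv
  have : ε ≤ 0 := ge_of_tendsto' h0 (fun n => (hfar (φ n) sl hsl).le)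
  linarith

/-- From the IVP: values near a given value of `f x` are attained to the left of `x`,
arbitrarily close to `x`. -/
lemma left_approx (f : ℝ → Set ℝ) (hf : USC f) (hivp : IVP f) (x : ℝ)
    (hx : x ∈ Icc (0:ℝ) 1) (y₀ : ℝ) (hy₀ : y₀ ∈ f x) (ε : ℝ) (hε : 0 < ε)
    (t₀ : ℝ) (ht₀ : t₀ ∈ Icc (0:ℝ) 1) (ht₀x : t₀ < x) :
    ∃ t, t₀ ≤ t ∧ t < x ∧ t ∈ Icc (0:ℝ) 1 ∧ ∃ y ∈ f t, |y - y₀| < ε := by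
  obtain ⟨w, hw⟩ := (hf.1 t₀ ht₀).1
  rcases eq_or_ne w y₀ with hwy | hwy
  · exact ⟨t₀, le_refl _, ht₀x, ht₀, w, hw, by simp [hwy, hε]⟩
  rcases hwy.lt_or_gt with hlt | hlt
  · -- w < y₀
    set c := min ε (y₀ - w) with hc
    have hc0 : 0 < c := lt_min hε (by linarith)
    have hcε : c ≤ ε := min_le_left _ _
    have hcw : c ≤ y₀ - w := min_le_right _ _
    have hy : y₀ - c/2 ∈ Ioo (min w y₀) (max w y₀) := by
      rw [min_eq_left hlt.le, max_eq_right hlt.le]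
      constructor <;> [linarith; linarith]
    obtain ⟨u, hu, hyu⟩ := hivp t₀ ht₀ x hx (ne_of_lt ht₀x) w hw y₀ hy₀ hwy _ hy
    rw [min_eq_left ht₀x.le, max_eq_right ht₀x.le] at hu
    refine ⟨u, hu.1.le, hu.2, ⟨le_trans ht₀.1 hu.1.le, hu.2.le.trans hx.2⟩,
      y₀ - c/2, hyu, ?_⟩
    rw [abs_lt]; constructor <;> linarith
  · -- y₀ < w
    set c := min ε (w - y₀) with hc
    have hc0 : 0 < c := lt_min hε (by linarith)
    have hcε : c ≤ ε := min_le_left _ _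
    have hcw : c ≤ w - y₀ := min_le_right _ _
    have hy : y₀ + c/2 ∈ Ioo (min w y₀) (max w y₀) := by
      rw [min_eq_right hlt.le, max_eq_left hlt.le]
      constructor <;> [linarith; linarith]
    obtain ⟨u, hu, hyu⟩ := hivp t₀ ht₀ x hx (ne_of_lt ht₀x) w hw y₀ hy₀ hwy _ hy
    rw [min_eq_left ht₀x.le, max_eq_right ht₀x.le] at hu
    refine ⟨u, hu.1.le, hu.2, ⟨le_trans ht₀.1 hu.1.le, hu.2.le.trans hx.2⟩,
      y₀ + c/2, hyu, ?_⟩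
    rw [abs_lt]; constructor <;> linarith

/-- a sequence of nondegenerate closed intervals to the left of `x`
converging to `{x}`, whose images converge to `f(x)` in the Hausdorff metric. -/
theorem stmt8 (f : ℝ → Set ℝ) (hf : USC f) (hsurj : Surj f)
    (hanf : AlmostNonfissile f) (hivp : IVP f)
    (x : ℝ) (hx : x ∈ Ioo (0:ℝ) 1) (a b : ℝ) (hab : a < b)
    (hfx : f x = Icc a b) :
    ∃ l r : ℕ → ℝ,
      (∀ k, l k < r k) ∧
      (∀ k, Icc (l k) (r k) ⊆ Icc (0:ℝ) 1) ∧
      (∀ k, r k < x) ∧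
      Tendsto l atTop (𝓝 x) ∧ Tendsto r atTop (𝓝 x) ∧
      Tendsto (fun k => Metric.hausdorffDist (⋃ t ∈ Icc (l k) (r k), f t) (f x))
        atTop (𝓝 0) := by
  have hx01 : x ∈ Icc (0:ℝ) 1 := ⟨hx.1.le, hx.2.le⟩
  have ha : a ∈ f x := by rw [hfx]; exact ⟨le_refl _, hab.le⟩
  have hb : b ∈ f x := by rw [hfx]; exact ⟨hab.le, le_refl _⟩
  have key : ∀ k : ℕ, ∃ l r : ℝ, l < r ∧ r < x ∧ x - 1/(k+1) < l ∧
      Icc l r ⊆ Icc (0:ℝ) 1 ∧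
      Metric.hausdorffDist (⋃ t ∈ Icc l r, f t) (f x) ≤ 1/(k+1) := by
    intro k
    have hk1 : (0:ℝ) < 1/(k+1) := by positivity
    set ε : ℝ := min (1/(k+1)) ((b-a)/4) with hεdef
    have hε : 0 < ε := lt_min hk1 (by linarith)
    have hεk : ε ≤ 1/(k+1) := min_le_left _ _
    have hεab : ε ≤ (b-a)/4 := min_le_right _ _
    obtain ⟨δ, hδ, hA⟩ := usc_est f hf x hx01 ε hε
    set η : ℝ := min δ (min (1/(k+1)) x) with hηdef
    have hη : 0 < η := lt_min hδ (lt_min hk1 hx.1)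
    have hηδ : η ≤ δ := min_le_left _ _
    have hηk : η ≤ 1/(k+1) := le_trans (min_le_right _ _) (min_le_left _ _)
    have hηx : η ≤ x := le_trans (min_le_right _ _) (min_le_right _ _)
    set t₀ : ℝ := x - η/2 with ht₀def
    have ht₀01 : t₀ ∈ Icc (0:ℝ) 1 := ⟨by simp only [ht₀def]; linarith, by
      simp only [ht₀def]; linarith [hx.2]⟩
    have ht₀x : t₀ < x := by simp only [ht₀def]; linarith
    obtain ⟨ta, hta0, htax, hta01, ya, hya, hyaa⟩ :=
      left_approx f hf hivp x hx01 a ha ε hε t₀ ht₀01 ht₀x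
    set t₁ : ℝ := (ta + x)/2 with ht₁def
    have hta1 : ta < t₁ := by simp only [ht₁def]; linarith
    have ht₁x : t₁ < x := by simp only [ht₁def]; linarith
    have ht₁01 : t₁ ∈ Icc (0:ℝ) 1 := ⟨le_trans hta01.1 hta1.le, ht₁x.le.trans hx01.2⟩
    obtain ⟨tb, htb1, htbx, htb01, yb, hyb, hybb⟩ :=
      left_approx f hf hivp x hx01 b hb ε hε t₁ ht₁01 ht₁x
    have htab : ta < tb := lt_of_lt_of_le hta1 htb1
    rw [abs_lt] at hyaa hybb
    have hyayb : ya < yb := by linarith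
    have hηk2 : η/2 < 1/(k+1) := by linarith
    have hlta : x - 1/(k+1) < ta := by
      have h2 : x - η/2 ≤ ta := by rw [ht₀def] at hta0; exact hta0
      linarith
    refine ⟨ta, tb, htab, htbx, hlta, ?_, ?_⟩
    · intro u hu
      exact ⟨le_trans hta01.1 hu.1, le_trans hu.2 (htbx.le.trans hx01.2)⟩
    · apply Metric.hausdorffDist_le_of_mem_dist hk1.le
      · rintro s hsmem
        simp only [mem_iUnion, exists_prop] at hsmem
        obtain ⟨u, hu, hsu⟩ := hsmem
        have hu01 : u ∈ Icc (0:ℝ) 1 :=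
          ⟨le_trans hta01.1 hu.1, le_trans hu.2 (htbx.le.trans hx01.2)⟩
        have hux : |u - x| < δ := by
          rw [abs_lt]
          constructor
          · have : t₀ ≤ u := le_trans hta0 hu.1
            simp only [ht₀def] at this
            linarith
          · have : u < x := lt_of_le_of_lt hu.2 htbx
            linarith
        obtain ⟨y, hy, hdy⟩ := hA u hu01 hux s hsu
        exact ⟨y, hy, hdy.trans hεk⟩
      · intro y hy
        rw [hfx] at hy
        rcases le_or_gt y ya with hyya | hyya
        · refine ⟨ya, ?_, ?_⟩
          · simp only [mem_iUnion, exists_prop]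
            exact ⟨ta, ⟨le_refl _, htab.le⟩, hya⟩
          · rw [Real.dist_eq, abs_le]
            constructor <;> [linarith [hy.1]; linarith [hy.1]]
        rcases le_or_gt yb y with hyby | hyby
        · refine ⟨yb, ?_, ?_⟩
          · simp only [mem_iUnion, exists_prop]
            exact ⟨tb, ⟨htab.le, le_refl _⟩, hyb⟩
          · rw [Real.dist_eq, abs_le]
            constructor <;> [linarith [hy.2]; linarith [hy.2]]
        · have hyIoo : y ∈ Ioo (min ya yb) (max ya yb) := by
            rw [min_eq_left hyayb.le, max_eq_right hyayb.le]
            exact ⟨hyya, hyby⟩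
          obtain ⟨u, hu, hyu⟩ := hivp ta (⟨le_trans hta01.1 (le_refl _), hta01.2⟩)
            tb htb01 (ne_of_lt htab) ya hya yb hyb (ne_of_lt hyayb) y hyIoo
          rw [min_eq_left htab.le, max_eq_right htab.le] at hu
          refine ⟨y, ?_, by simp; positivity⟩
          simp only [mem_iUnion, exists_prop]
          exact ⟨u, ⟨hu.1.le, hu.2.le⟩, hyu⟩
  choose l r h1 h2 h3 h4 h5 using key
  have hlow : Tendsto (fun k : ℕ => x - 1/(k+1:ℝ)) atTop (𝓝 x) := by
    have := tendsto_const_nhds (x := x) (f := atTop (α := ℕ))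
    simpa using this.sub tendsto_one_div_add_atTop_nhds_zero_nat
  refine ⟨l, r, h1, h4, h2, ?_, ?_, ?_⟩
  · exact tendsto_of_tendsto_of_tendsto_of_le_of_le hlow tendsto_const_nhds
      (fun k => (h3 k).le) (fun k => ((h1 k).trans (h2 k)).le)
  · exact tendsto_of_tendsto_of_tendsto_of_le_of_le hlow tendsto_const_nhds
      (fun k => ((h3 k).trans (h1 k)).le) (fun k => (h2 k).le)
  · exact squeeze_zero (fun k => Metric.hausdorffDist_nonneg) h5
      tendsto_one_div_add_atTop_nhds_zero_nat
end

section
/- Suppose for each n ∈ ℕ, f_n : [0,1] → 2^[0,1] is a surjective, light, almost nonfissile, upper semicontinuous set-valued map with the intermediate value property. Then the inverse limit X = lim←{[0,1], f_n} has the full-projection property: every subcontinuum K of X with π_i[K] = [0,1] for infinitely many i equals X. -/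
open Set Filter Topology

namespace Stmt17Aux

/-- Finite chains of length `n+1` for the system `f`. -/
def ChainN (f : ℕ → ℝ → Set ℝ) (n : ℕ) (z : ℕ → ℝ) : Prop :=
  (∀ j, j ≤ n → z j ∈ Icc (0:ℝ) 1) ∧ ∀ j, j < n → z j ∈ f (j + 1) (z (j + 1))

lemma usc_small {f : ℝ → Set ℝ} (hf : USC f) {x₄ y₄ r : ℝ} (hx : x₄ ∈ Icc (0:ℝ) 1)
    (hsing : f x₄ = {y₄}) (hr : 0 < r) :
    ∃ δ, 0 < δ ∧ ∀ x ∈ Icc (0:ℝ) 1, |x - x₄| < δ → f x ⊆ Metric.ball y₄ r := by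
  set C : Set (ℝ × ℝ) := SVGraph f ∩ {p | r ≤ |p.2 - y₄|} with hCdef
  have hCclosed : IsClosed C :=
    hf.2.inter (isClosed_le continuous_const ((continuous_snd.sub continuous_const).abs))
  have hCsub : C ⊆ Icc (0:ℝ) 1 ×ˢ Icc (0:ℝ) 1 := by
    rintro ⟨p1, p2⟩ ⟨⟨h1, h2⟩, _⟩
    exact ⟨h1, ((hf.1 p1 h1).2.1) h2⟩
  have hCcomp : IsCompact C := (isCompact_Icc.prod isCompact_Icc).of_isClosed_subset hCclosed hCsub
  have hPcomp : IsCompact (Prod.fst '' C) := hCcomp.image continuous_fst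
  have hxP : x₄ ∉ Prod.fst '' C := by
    rintro ⟨⟨p1, p2⟩, ⟨⟨hp1, hp2⟩, hpr⟩, rfl⟩
    rw [hsing, mem_singleton_iff] at hp2
    have hpr' : r ≤ |(p1, p2).2 - y₄| := hpr
    rw [hp2, sub_self, abs_zero] at hpr'
    linarith
  rcases (Prod.fst '' C).eq_empty_or_nonempty with hPe | hPne
  · refine ⟨1, one_pos, fun x hx' _ y hy => ?_⟩
    by_contra hb
    rw [Metric.mem_ball, Real.dist_eq, not_lt] at hb
    have hxC : x ∈ Prod.fst '' C := ⟨(x, y), ⟨⟨hx', hy⟩, hb⟩, rfl⟩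
    rw [hPe] at hxC
    exact hxC
  · refine ⟨Metric.infDist x₄ (Prod.fst '' C),
      (hPcomp.isClosed.notMem_iff_infDist_pos hPne).mp hxP, ?_⟩
    intro x hx' hd y hy
    by_contra hb
    rw [Metric.mem_ball, Real.dist_eq, not_lt] at hb
    have hxC : x ∈ Prod.fst '' C := ⟨(x, y), ⟨⟨hx', hy⟩, hb⟩, rfl⟩
    have hle := Metric.infDist_le_dist_of_mem (x := x₄) hxC
    rw [Real.dist_eq, abs_sub_comm] at hle
    linarith

lemma keyH (f : ℕ → ℝ → Set ℝ)
    (husc : ∀ n, USC (f n)) (hl : ∀ n, Light (f n))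
    (hanf : ∀ n, AlmostNonfissile (f n)) (hivp : ∀ n, IVP (f n)) :
    ∀ n (w : ℕ → ℝ), ChainN f n w → ∀ ε : ℝ, 0 < ε → ∀ t, t ∈ Icc (0:ℝ) 1 → t ≠ w n →
    ∃ a b : ℝ, a < b ∧ Ioo a b ⊆ Ioo (min (w n) t) (max (w n) t) ∧
      ∀ z, ChainN f n z → z n ∈ Ioo a b → ∀ j, j ≤ n → |z j - w j| < ε := by
  intro n
  induction n with
  | zero =>
    intro w hw ε hε t ht htne
    rcases htne.lt_or_gt with h | h
    · -- t < w 0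
      refine ⟨max t (w 0 - ε), w 0, max_lt h (by linarith), ?_, ?_⟩
      · intro u hu
        rw [min_eq_right h.le, max_eq_left h.le]
        exact ⟨lt_of_le_of_lt (le_max_left _ _) hu.1, hu.2⟩
      · intro z _ hz0 j hj
        have hj0 : j = 0 := Nat.le_zero.mp hj
        subst hj0
        have h1 : z 0 < w 0 := hz0.2
        have h2 : w 0 - ε ≤ max t (w 0 - ε) := le_max_right _ _
        have h3 := hz0.1
        rw [abs_lt]; constructor <;> linarith
    · -- w 0 < t
      refine ⟨w 0, min t (w 0 + ε), lt_min h (by linarith), ?_, ?_⟩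
      · intro u hu
        rw [min_eq_left h.le, max_eq_right h.le]
        exact ⟨hu.1, lt_of_lt_of_le hu.2 (min_le_left _ _)⟩
      · intro z _ hz0 j hj
        have hj0 : j = 0 := Nat.le_zero.mp hj
        subst hj0
        have h1 : w 0 < z 0 := hz0.1
        have h2 : min t (w 0 + ε) ≤ w 0 + ε := min_le_right _ _
        have h3 := hz0.2
        rw [abs_lt]; constructor <;> linarith
  | succ n ih =>
    intro w hw ε hε t' ht' ht'ne
    have hwt : w (n + 1) ∈ Icc (0:ℝ) 1 := hw.1 (n + 1) le_rfl
    have hwn : w n ∈ Icc (0:ℝ) 1 := hw.1 n (Nat.le_succ n)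
    have hwmem : w n ∈ f (n + 1) (w (n + 1)) := hw.2 n (Nat.lt_succ_self n)
    -- choose x' via lightness, strictly between w (n+1) and t', within ε of w (n+1)
    obtain ⟨x', hx'Icc, hx'ne, hnotin, hIoo_sub, hclose_all⟩ :
        ∃ x', x' ∈ Icc (0:ℝ) 1 ∧ w (n + 1) ≠ x' ∧ w n ∉ f (n + 1) x' ∧
          (Ioo (min (w (n+1)) x') (max (w (n+1)) x') ⊆
            Ioo (min (w (n+1)) t') (max (w (n+1)) t')) ∧
          ∀ v ∈ Ioo (min (w (n+1)) x') (max (w (n+1)) x'), |v - w (n + 1)| < ε := by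
      rcases ht'ne.lt_or_gt with h | h
      · -- t' < w (n+1)
        have hc1 : max t' (w (n+1) - ε) < w (n+1) := max_lt h (by linarith)
        have hmid : ((max t' (w (n+1) - ε) + w (n+1)) / 2) ∈
            Ioo (max t' (w (n+1) - ε)) (w (n+1)) ∩ Icc (0:ℝ) 1 := by
          have ht0 : (0:ℝ) ≤ t' := ht'.1
          have h4 : t' ≤ max t' (w (n+1) - ε) := le_max_left _ _
          refine ⟨⟨by linarith, by linarith⟩, ⟨by linarith, ?_⟩⟩
          have := hwt.2; linarith
        obtain ⟨x', hx'mem, hnot⟩ := hl (n + 1) (w n) _ isOpen_Ioo ⟨_, hmid⟩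
        obtain ⟨hx'I, hx'Icc⟩ := hx'mem
        have hlt : x' < w (n+1) := hx'I.2
        have hgt : max t' (w (n+1) - ε) < x' := hx'I.1
        refine ⟨x', hx'Icc, (ne_of_gt hlt), hnot, ?_, ?_⟩
        · rw [min_eq_right hlt.le, max_eq_left hlt.le, min_eq_right h.le, max_eq_left h.le]
          intro u hu
          have h4 : t' ≤ max t' (w (n+1) - ε) := le_max_left _ _
          exact ⟨by linarith [hu.1], hu.2⟩
        · rw [min_eq_right hlt.le, max_eq_left hlt.le]
          intro v hv
          have h4 : w (n+1) - ε ≤ max t' (w (n+1) - ε) := le_max_right _ _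
          rw [abs_lt]; constructor <;> [linarith [hv.1]; linarith [hv.2]]
      · -- w (n+1) < t'
        have hc1 : w (n+1) < min t' (w (n+1) + ε) := lt_min h (by linarith)
        have hmid : ((w (n+1) + min t' (w (n+1) + ε)) / 2) ∈
            Ioo (w (n+1)) (min t' (w (n+1) + ε)) ∩ Icc (0:ℝ) 1 := by
          have ht1 : t' ≤ 1 := ht'.2
          have h4 : min t' (w (n+1) + ε) ≤ t' := min_le_left _ _
          refine ⟨⟨by linarith, by linarith⟩, ⟨?_, by linarith⟩⟩
          have := hwt.1; linarith
        obtain ⟨x', hx'mem, hnot⟩ := hl (n + 1) (w n) _ isOpen_Ioo ⟨_, hmid⟩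
        obtain ⟨hx'I, hx'Icc⟩ := hx'mem
        have hgt : w (n+1) < x' := hx'I.1
        have hlt : x' < min t' (w (n+1) + ε) := hx'I.2
        refine ⟨x', hx'Icc, (ne_of_lt hgt), hnot, ?_, ?_⟩
        · rw [min_eq_left hgt.le, max_eq_right hgt.le, min_eq_left h.le, max_eq_right h.le]
          intro u hu
          have h4 : min t' (w (n+1) + ε) ≤ t' := min_le_left _ _
          exact ⟨hu.1, by linarith [hu.2]⟩
        · rw [min_eq_left hgt.le, max_eq_right hgt.le]
          intro v hv
          have h4 : min t' (w (n+1) + ε) ≤ w (n+1) + ε := min_le_right _ _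
          rw [abs_lt]; constructor <;> [linarith [hv.1]; linarith [hv.2]]
    -- pick y' ∈ f (n+1) x'
    have hfx' := (husc (n + 1)).1 x' hx'Icc
    obtain ⟨y', hy'⟩ := hfx'.1
    have hy'Icc : y' ∈ Icc (0:ℝ) 1 := hfx'.2.1 hy'
    have hy'ne : y' ≠ w n := fun h => hnotin (h ▸ hy')
    -- inductive hypothesis with t := y'
    have hwchain : ChainN f n w :=
      ⟨fun j hj => hw.1 j (le_trans hj (Nat.le_succ n)),
       fun j hj => hw.2 j (Nat.lt_succ_of_lt hj)⟩
    obtain ⟨a, b, hab, hsub, hchain⟩ := ih w hwchain ε hε y' hy'Icc hy'ne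
    set u := (a + b) / 2 with hudef
    have hu : u ∈ Ioo a b := ⟨by rw [hudef]; linarith, by rw [hudef]; linarith⟩
    have hstrad := hsub hu
    -- IVP
    obtain ⟨x₃, hx₃, hux₃⟩ := hivp (n + 1) (w (n + 1)) hwt x' hx'Icc hx'ne (w n) hwmem
      y' hy' (fun h => hy'ne h.symm) u hstrad
    have hx₃Icc : x₃ ∈ Icc (0:ℝ) 1 :=
      ⟨le_trans (le_min hwt.1 hx'Icc.1) hx₃.1.le, le_trans hx₃.2.le (max_le hwt.2 hx'Icc.2)⟩
    -- almost-nonfissile point near (x₃, u)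
    have hgr : ((x₃, u) : ℝ × ℝ) ∈ SVGraph (f (n + 1)) := ⟨hx₃Icc, hux₃⟩
    have hcl := hanf (n + 1) hgr
    set ρ := min (min (x₃ - min (w (n+1)) x') (max (w (n+1)) x' - x₃)) (min (u - a) (b - u))
      with hρdef
    have hρ : 0 < ρ := by
      refine lt_min (lt_min ?_ ?_) (lt_min ?_ ?_) <;>
        [linarith [hx₃.1]; linarith [hx₃.2]; linarith [hu.1]; linarith [hu.2]]
    rw [Metric.mem_closure_iff] at hcl
    obtain ⟨q, hqNF, hqd⟩ := hcl ρ hρ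
    obtain ⟨⟨hq1Icc, hq2⟩, hqsing⟩ := hqNF
    rw [Prod.dist_eq] at hqd
    have hd1 : |x₃ - q.1| < ρ := by
      have := lt_of_le_of_lt (le_max_left (dist x₃ q.1) (dist u q.2)) hqd
      rwa [Real.dist_eq] at this
    have hd2 : |u - q.2| < ρ := by
      have := lt_of_le_of_lt (le_max_right (dist x₃ q.1) (dist u q.2)) hqd
      rwa [Real.dist_eq] at this
    have hA : ρ ≤ x₃ - min (w (n+1)) x' := le_trans (min_le_left _ _) (min_le_left _ _)
    have hB : ρ ≤ max (w (n+1)) x' - x₃ := le_trans (min_le_left _ _) (min_le_right _ _)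
    have hC : ρ ≤ u - a := le_trans (min_le_right _ _) (min_le_left _ _)
    have hD : ρ ≤ b - u := le_trans (min_le_right _ _) (min_le_right _ _)
    rw [abs_lt] at hd1 hd2
    have hx₄Ioo : q.1 ∈ Ioo (min (w (n+1)) x') (max (w (n+1)) x') :=
      ⟨by linarith [hd1.2], by linarith [hd1.1]⟩
    have hy₄Ioo : q.2 ∈ Ioo a b := ⟨by linarith [hd2.2], by linarith [hd2.1]⟩
    -- usc small-values neighbourhood
    have hr : 0 < min (q.2 - a) (b - q.2) :=
      lt_min (by linarith [hy₄Ioo.1]) (by linarith [hy₄Ioo.2])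
    obtain ⟨δ, hδ, hball⟩ := usc_small (husc (n + 1)) hq1Icc hqsing hr
    refine ⟨max (q.1 - δ) (min (w (n+1)) x'), min (q.1 + δ) (max (w (n+1)) x'), ?_, ?_, ?_⟩
    · exact lt_trans (max_lt (by linarith) hx₄Ioo.1) (lt_min (by linarith) hx₄Ioo.2)
    · intro v hv
      exact hIoo_sub ⟨lt_of_le_of_lt (le_max_right _ _) hv.1,
        lt_of_lt_of_le hv.2 (min_le_right _ _)⟩
    · intro z hz hzn j hj
      have hzsub : ChainN f n z :=
        ⟨fun j hj => hz.1 j (le_trans hj (Nat.le_succ n)),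
         fun j hj => hz.2 j (Nat.lt_succ_of_lt hj)⟩
      have hz1Icc : z (n + 1) ∈ Icc (0:ℝ) 1 := hz.1 (n + 1) le_rfl
      have hzIoo' : z (n + 1) ∈ Ioo (min (w (n+1)) x') (max (w (n+1)) x') :=
        ⟨lt_of_le_of_lt (le_max_right _ _) hzn.1, lt_of_lt_of_le hzn.2 (min_le_right _ _)⟩
      rcases eq_or_lt_of_le hj with hj' | hj'
      · rw [hj']
        exact hclose_all _ hzIoo'
      · have hjn : j ≤ n := Nat.lt_succ_iff.mp hj'
        have hmem : z n ∈ f (n + 1) (z (n + 1)) := hz.2 n (Nat.lt_succ_self n)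
        have hdz : |z (n + 1) - q.1| < δ := by
          have h1 : q.1 - δ ≤ max (q.1 - δ) (min (w (n+1)) x') := le_max_left _ _
          have h2 : min (q.1 + δ) (max (w (n+1)) x') ≤ q.1 + δ := min_le_left _ _
          rw [abs_lt]; constructor <;> [linarith [hzn.1]; linarith [hzn.2]]
        have hzb := hball (z (n + 1)) hz1Icc hdz hmem
        rw [Metric.mem_ball, Real.dist_eq] at hzb
        have hr1 : min (q.2 - a) (b - q.2) ≤ q.2 - a := min_le_left _ _
        have hr2 : min (q.2 - a) (b - q.2) ≤ b - q.2 := min_le_right _ _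
        rw [abs_lt] at hzb
        have hzab : z n ∈ Ioo a b := ⟨by linarith [hzb.1], by linarith [hzb.2]⟩
        exact hchain z hzsub hzab j hjn

end Stmt17Aux

/-- the inverse limit of surjective, light, almost nonfissile usc
maps with the IVP has the full-projection property. -/
theorem stmt17 (f : ℕ → ℝ → Set ℝ)
    (husc : ∀ n, USC (f n)) (hsurj : ∀ n, Surj (f n))
    (hl : ∀ n, Light (f n)) (hanf : ∀ n, AlmostNonfissile (f n))
    (hivp : ∀ n, IVP (f n)) :
    ∀ K ⊆ {z : ℕ → ℝ | (∀ i, z i ∈ Icc (0:ℝ) 1) ∧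
        ∀ i, z i ∈ f (i + 1) (z (i + 1))},
      IsCompact K → IsConnected K →
      {i : ℕ | (fun z : ℕ → ℝ => z i) '' K = Icc (0:ℝ) 1}.Infinite →
      K = {z : ℕ → ℝ | (∀ i, z i ∈ Icc (0:ℝ) 1) ∧
        ∀ i, z i ∈ f (i + 1) (z (i + 1))} := by
  intro K hKX hKc _hKconn hinf
  -- step: full projection propagates downward
  have hsubΙ : ∀ i, (fun z : ℕ → ℝ => z i) '' K ⊆ Icc (0:ℝ) 1 := by
    rintro i _ ⟨z, hz, rfl⟩
    exact (hKX hz).1 i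
  have hstep : ∀ i, (fun z : ℕ → ℝ => z (i + 1)) '' K = Icc (0:ℝ) 1 →
      (fun z : ℕ → ℝ => z i) '' K = Icc (0:ℝ) 1 := by
    intro i hfull
    refine Subset.antisymm (hsubΙ i) ?_
    intro y hy
    obtain ⟨x, hxIcc, hyx⟩ := hsurj (i + 1) y hy
    have hxy : ((x, y) : ℝ × ℝ) ∈ SVGraph (f (i + 1)) := ⟨hxIcc, hyx⟩
    have hA : IsCompact ((fun z : ℕ → ℝ => (z (i + 1), z i)) '' K) :=
      hKc.image (Continuous.prodMk (continuous_apply (i + 1)) (continuous_apply i))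
    have hNF : {p : ℝ × ℝ | p ∈ SVGraph (f (i + 1)) ∧ f (i + 1) p.1 = {p.2}} ⊆
        (fun z : ℕ → ℝ => (z (i + 1), z i)) '' K := by
      rintro ⟨p1, p2⟩ ⟨⟨hp1, _⟩, hps⟩
      have hp1' : p1 ∈ (fun z : ℕ → ℝ => z (i + 1)) '' K := by rw [hfull]; exact hp1
      obtain ⟨z, hzK, hz1⟩ := hp1'
      have hz1' : z (i + 1) = p1 := hz1
      have hzi : z i ∈ f (i + 1) (z (i + 1)) := (hKX hzK).2 i
      rw [hz1', hps, mem_singleton_iff] at hzi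
      exact ⟨z, hzK, by simp only [hz1', hzi]⟩
    have hclos := closure_mono hNF
    rw [hA.isClosed.closure_eq] at hclos
    obtain ⟨z, hzK, hze⟩ := hclos (hanf (i + 1) hxy)
    exact ⟨z, hzK, congrArg Prod.snd hze⟩
  have hdown : ∀ d i, (fun z : ℕ → ℝ => z (i + d)) '' K = Icc (0:ℝ) 1 →
      (fun z : ℕ → ℝ => z i) '' K = Icc (0:ℝ) 1 := by
    intro d
    induction d with
    | zero => intro i h; exact h
    | succ d ihd =>
      intro i h
      refine hstep i (ihd (i + 1) ?_)
      have e : i + 1 + d = i + (d + 1) := by omega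
      rw [e]; exact h
  have hproj : ∀ i, (fun z : ℕ → ℝ => z i) '' K = Icc (0:ℝ) 1 := by
    intro i
    obtain ⟨j, hjS, hij⟩ : ∃ j ∈ {i : ℕ | (fun z : ℕ → ℝ => z i) '' K = Icc (0:ℝ) 1}, i ≤ j := by
      by_contra h
      push_neg at h
      exact hinf ((Set.finite_Iio i).subset (fun j hj => h j hj))
    refine hdown (j - i) i ?_
    rw [Nat.add_sub_cancel' hij]
    exact hjS
  -- density of K in X
  refine Subset.antisymm hKX ?_
  intro w hw
  have happrox : ∀ n : ℕ, ∀ ε : ℝ, 0 < ε → ∃ z ∈ K, ∀ j, j ≤ n → |z j - w j| < ε := by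
    intro n ε hε
    have hwch : Stmt17Aux.ChainN f n w := ⟨fun j _ => hw.1 j, fun j _ => hw.2 j⟩
    have hwnIcc : w n ∈ Icc (0:ℝ) 1 := hw.1 n
    obtain ⟨t, htIcc, htne⟩ : ∃ t, t ∈ Icc (0:ℝ) 1 ∧ t ≠ w n := by
      rcases lt_or_ge (w n) 1 with h | h
      · exact ⟨1, ⟨zero_le_one, le_rfl⟩, h.ne'⟩
      · exact ⟨0, ⟨le_rfl, zero_le_one⟩, (lt_of_lt_of_le one_pos h).ne⟩
    obtain ⟨a, b, hab, hsubI, hch⟩ :=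
      Stmt17Aux.keyH f husc hl hanf hivp n w hwch ε hε t htIcc htne
    have hx : (a + b) / 2 ∈ Ioo a b := ⟨by linarith, by linarith⟩
    have hxI := hsubI hx
    have hxIcc : (a + b) / 2 ∈ Icc (0:ℝ) 1 :=
      ⟨le_trans (le_min hwnIcc.1 htIcc.1) hxI.1.le,
       le_trans hxI.2.le (max_le hwnIcc.2 htIcc.2)⟩
    have hxK : (a + b) / 2 ∈ (fun z : ℕ → ℝ => z n) '' K := by rw [hproj n]; exact hxIcc
    obtain ⟨z, hzK, hzn⟩ := hxK
    have hzn' : z n = (a + b) / 2 := hzn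
    refine ⟨z, hzK, hch z ⟨fun j _ => (hKX hzK).1 j, fun j _ => (hKX hzK).2 j⟩ ?_⟩
    rw [hzn']; exact hx
  choose zfun hzK hzclose using fun m : ℕ => happrox m (1 / ((m : ℝ) + 1)) (by positivity)
  have htend : Tendsto zfun atTop (𝓝 w) := by
    rw [tendsto_pi_nhds]
    intro i
    rw [tendsto_iff_dist_tendsto_zero]
    refine squeeze_zero' (Eventually.of_forall fun m => dist_nonneg) ?_
      tendsto_one_div_add_atTop_nhds_zero_nat
    filter_upwards [eventually_ge_atTop i] with m him
    rw [Real.dist_eq]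
    exact (hzclose m i him).le
  have hwcl : w ∈ closure K := mem_closure_of_tendsto htend (Eventually.of_forall hzK)
  rwa [hKc.isClosed.closure_eq] at hwcl
end

section
/- Let f : [0,1] → 2^[0,1] be upper semicontinuous with the intermediate value property, and let n ≥ 1, y ∈ (0,1) with f^n(y) = [c,d] and c < y < d. Then there exists a sequence {p_i} with p_i < y, p_i → y, and y ∈ f^n(p_i) for all i. -/
open Set Filter Topology

lemma mem_between {a b c : ℝ} (h1 : a < c) (h2 : c < b) :
    c ∈ Ioo (min a b) (max a b) :=
  ⟨(min_le_left a b).trans_lt h1, h2.trans_le (le_max_right a b)⟩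

lemma mem_between' {a b c : ℝ} (h1 : b < c) (h2 : c < a) :
    c ∈ Ioo (min a b) (max a b) :=
  ⟨(min_le_right a b).trans_lt h1, h2.trans_le (le_max_left a b)⟩

/-- Values of a USC function with the IVP are order-convex. -/
lemma intervalVal (f : ℝ → Set ℝ) (hf : USC f) (hivp : IVP f)
    {z y₁ y₂ yy : ℝ} (hz : z ∈ Icc (0:ℝ) 1) (h1 : y₁ ∈ f z) (h2 : y₂ ∈ f z)
    (hy : yy ∈ Icc (min y₁ y₂) (max y₁ y₂)) : yy ∈ f z := by
  have hmin : min y₁ y₂ ∈ f z := by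
    rcases min_cases y₁ y₂ with ⟨h, _⟩ | ⟨h, _⟩ <;> rw [h] <;> assumption
  have hmax : max y₁ y₂ ∈ f z := by
    rcases max_cases y₁ y₂ with ⟨h, _⟩ | ⟨h, _⟩ <;> rw [h] <;> assumption
  rcases eq_or_lt_of_le hy.1 with h | hm
  · rwa [← h]
  rcases eq_or_lt_of_le hy.2 with h | hM
  · rwa [h]
  -- strict case : min < yy < max
  have claim : ∀ ε : ℝ, 0 < ε → ∃ t, t ∈ Icc (0:ℝ) 1 ∧ |t - z| < ε ∧ yy ∈ f t := by
    intro ε hε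
    -- pick z'' ≠ z close to z inside [0,1]
    have hz'' : ∃ z'', z'' ∈ Icc (0:ℝ) 1 ∧ z'' ≠ z ∧ |z'' - z| < ε := by
      rcases lt_or_eq_of_le hz.2 with hlt | heq
      · refine ⟨min (z + ε/2) 1, ⟨le_min (by linarith [hz.1]) zero_le_one,
          min_le_right _ _⟩, ?_, ?_⟩
        · have : z < min (z + ε/2) 1 := lt_min (by linarith) hlt
          exact ne_of_gt this
        · have ha : min (z + ε/2) 1 ≤ z + ε/2 := min_le_left _ _
          have hb : z < min (z + ε/2) 1 := lt_min (by linarith) hlt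
          rw [abs_lt]; constructor <;> linarith
      · refine ⟨max (z - ε/2) 0, ⟨le_max_right _ _,
          max_le (by linarith [hz.2]) zero_le_one⟩, ?_, ?_⟩
        · have h0 : (0:ℝ) < z := by rw [heq]; norm_num
          have : max (z - ε/2) 0 < z := max_lt (by linarith) h0
          exact ne_of_lt this
        · have ha : z - ε/2 ≤ max (z - ε/2) 0 := le_max_left _ _
          have h0 : (0:ℝ) < z := by rw [heq]; norm_num
          have hb : max (z - ε/2) 0 < z := max_lt (by linarith) h0
          rw [abs_lt]; constructor <;> linarith
    obtain ⟨z'', hz''I, hne, habs⟩ := hz''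
    obtain ⟨w, hw⟩ := (hf.1 z'' hz''I).1
    have habs' := abs_lt.mp habs
    rcases lt_trichotomy w yy with hlt | heq | hgt
    · -- w < yy < max
      obtain ⟨t, ht, hyt⟩ := hivp z'' hz''I z hz hne w hw (max y₁ y₂) hmax
        (ne_of_lt (hlt.trans hM)) yy (mem_between hlt hM)
      refine ⟨t, ⟨(le_min hz''I.1 hz.1).trans ht.1.le, ht.2.le.trans (max_le hz''I.2 hz.2)⟩,
        ?_, hyt⟩
      rcases le_total z'' z with hc | hc
      · rw [min_eq_left hc, max_eq_right hc] at ht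
        rw [abs_lt]; constructor <;> linarith [ht.1, ht.2]
      · rw [min_eq_right hc, max_eq_left hc] at ht
        rw [abs_lt]; constructor <;> linarith [ht.1, ht.2]
    · exact ⟨z'', hz''I, habs, heq ▸ hw⟩
    · obtain ⟨t, ht, hyt⟩ := hivp z'' hz''I z hz hne w hw (min y₁ y₂) hmin
        (ne_of_gt (hm.trans hgt)) yy (mem_between' hm hgt)
      refine ⟨t, ⟨(le_min hz''I.1 hz.1).trans ht.1.le, ht.2.le.trans (max_le hz''I.2 hz.2)⟩,
        ?_, hyt⟩
      rcases le_total z'' z with hc | hc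
      · rw [min_eq_left hc, max_eq_right hc] at ht
        rw [abs_lt]; constructor <;> linarith [ht.1, ht.2]
      · rw [min_eq_right hc, max_eq_left hc] at ht
        rw [abs_lt]; constructor <;> linarith [ht.1, ht.2]
  have hcl : (z, yy) ∈ closure (SVGraph f) := by
    rw [Metric.mem_closure_iff]
    intro ε hε
    obtain ⟨t, htI, habs, hyt⟩ := claim ε hε
    refine ⟨(t, yy), ⟨htI, hyt⟩, ?_⟩
    rw [Prod.dist_eq]
    simp only [Real.dist_eq, sub_self, abs_zero]
    rw [abs_sub_comm]
    exact max_lt habs hε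
  rw [hf.2.closure_eq] at hcl
  exact hcl.2

/-- USC is preserved by set-valued composition. -/
lemma comp_USC (f h : ℝ → Set ℝ) (hf : USC f) (hh : USC h) :
    USC (fun x => ⋃ z ∈ h x, f z) := by
  constructor
  · intro x hx
    refine ⟨?_, ?_, ?_⟩
    · obtain ⟨z, hz⟩ := (hh.1 x hx).1
      obtain ⟨w, hw⟩ := (hf.1 z ((hh.1 x hx).2.1 hz)).1
      exact ⟨w, mem_biUnion hz hw⟩
    · intro v hv
      simp only [mem_iUnion, exists_prop] at hv
      obtain ⟨z, hz, hvz⟩ := hv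
      exact (hf.1 z ((hh.1 x hx).2.1 hz)).2.1 hvz
    · show IsCompact (⋃ z ∈ h x, f z)
      have hval : (⋃ z ∈ h x, f z) = Prod.snd '' ((h x ×ˢ Icc (0:ℝ) 1) ∩ SVGraph f) := by
        ext v
        simp only [mem_iUnion, exists_prop, mem_image, mem_inter_iff, mem_prod,
          SVGraph, mem_setOf_eq]
        constructor
        · rintro ⟨z, hz, hvz⟩
          have hzI := (hh.1 x hx).2.1 hz
          exact ⟨(z, v), ⟨⟨hz, (hf.1 z hzI).2.1 hvz⟩, hzI, hvz⟩, rfl⟩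
        · rintro ⟨⟨z, v'⟩, ⟨⟨hz, _⟩, _, hv'⟩, rfl⟩
          exact ⟨z, hz, hv'⟩
      rw [hval]
      exact (((hh.1 x hx).2.2.prod isCompact_Icc).inter_right hf.2).image continuous_snd
  · set K : Set (ℝ × ℝ × ℝ) :=
      {p | (p.1, p.2.1) ∈ SVGraph h ∧ (p.2.1, p.2.2) ∈ SVGraph f} with hKdef
    have hKclosed : IsClosed K := by
      apply IsClosed.inter
      · exact hh.2.preimage (continuous_fst.prodMk (continuous_fst.comp continuous_snd))
      · exact hf.2.preimage ((continuous_fst.comp continuous_snd).prodMk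
          (continuous_snd.comp continuous_snd))
    have hKcomp : IsCompact K := by
      apply IsCompact.of_isClosed_subset
        (isCompact_Icc.prod (isCompact_Icc.prod isCompact_Icc)) hKclosed
      rintro ⟨a, b, c⟩ ⟨⟨haI, hb⟩, ⟨hbI, hc⟩⟩
      exact ⟨haI, hbI, (hf.1 b hbI).2.1 hc⟩
    have hG : SVGraph (fun x => ⋃ z ∈ h x, f z)
        = (fun p : ℝ × ℝ × ℝ => (p.1, p.2.2)) '' K := by
      ext ⟨x, v⟩
      simp only [SVGraph, mem_setOf_eq, mem_iUnion, exists_prop, mem_image, hKdef]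
      constructor
      · rintro ⟨hxI, z, hz, hvz⟩
        exact ⟨(x, z, v), ⟨⟨hxI, hz⟩, ⟨(hh.1 x hxI).2.1 hz, hvz⟩⟩, rfl⟩
      · rintro ⟨⟨a, b, c⟩, ⟨⟨haI, hb⟩, ⟨hbI, hc⟩⟩, heq⟩
        obtain ⟨rfl, rfl⟩ : a = x ∧ c = v := by
          constructor <;> · have := congrArg Prod.fst heq <;> simp_all
        exact ⟨haI, b, hb, hc⟩
    rw [hG]
    exact (hKcomp.image (continuous_fst.prodMk (continuous_snd.comp continuous_snd))).isClosed

/-- IVP is preserved by set-valued composition (given USC). -/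
lemma comp_IVP (f h : ℝ → Set ℝ) (hf : USC f) (hh : USC h)
    (hif : IVP f) (hih : IVP h) : IVP (fun x => ⋃ z ∈ h x, f z) := by
  intro x₁ hx₁ x₂ hx₂ hx12 y₁ hy₁ y₂ hy₂ hy12 y hy
  simp only [mem_iUnion, exists_prop] at hy₁ hy₂
  obtain ⟨z₁, hz₁, hyz₁⟩ := hy₁
  obtain ⟨z₂, hz₂, hyz₂⟩ := hy₂
  have hz₁I : z₁ ∈ Icc (0:ℝ) 1 := (hh.1 x₁ hx₁).2.1 hz₁
  have hz₂I : z₂ ∈ Icc (0:ℝ) 1 := (hh.1 x₂ hx₂).2.1 hz₂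
  by_cases hzz : z₁ = z₂
  · subst hzz
    set x₃ := (x₁ + x₂) / 2 with hx₃def
    have hsum := min_add_max x₁ x₂
    have hmlt : min x₁ x₂ < max x₁ x₂ := min_lt_max.mpr hx12
    have hx₃mem : x₃ ∈ Ioo (min x₁ x₂) (max x₁ x₂) := by
      constructor <;> (rw [hx₃def]; linarith)
    have hx₃I : x₃ ∈ Icc (0:ℝ) 1 := by
      constructor <;> (rw [hx₃def]; cases hx₁ ; cases hx₂ ; linarith)
    have hx₃ne : x₃ ≠ x₁ := fun hcon => hx12 (by rw [hx₃def] at hcon; linarith)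
    obtain ⟨z₃, hz₃⟩ := (hh.1 x₃ hx₃I).1
    have hz₃I : z₃ ∈ Icc (0:ℝ) 1 := (hh.1 x₃ hx₃I).2.1 hz₃
    have hsub : Ioo (min x₃ x₁) (max x₃ x₁) ⊆ Ioo (min x₁ x₂) (max x₁ x₂) :=
      Ioo_subset_Ioo (le_min hx₃mem.1.le (min_le_left _ _))
        (max_le hx₃mem.2.le (le_max_left _ _))
    by_cases hz3 : z₃ = z₁
    · have hyf : y ∈ f z₁ :=
        intervalVal f hf hif hz₁I hyz₁ hyz₂ (Ioo_subset_Icc_self hy)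
      exact ⟨x₃, hx₃mem, mem_biUnion hz₃ (hz3 ▸ hyf)⟩
    · obtain ⟨w, hw⟩ := (hf.1 z₃ hz₃I).1
      rcases lt_trichotomy w y with hlt | heq | hgt
      · have hM : max y₁ y₂ ∈ f z₁ := by
          rcases max_cases y₁ y₂ with ⟨he, _⟩ | ⟨he, _⟩ <;> rw [he] <;> assumption
        obtain ⟨t, ht, hyt⟩ := hif z₃ hz₃I z₁ hz₁I hz3 w hw (max y₁ y₂) hM
          (ne_of_lt (hlt.trans hy.2)) y (mem_between hlt hy.2)
        obtain ⟨x, hx, htx⟩ := hih x₃ hx₃I x₁ hx₁ hx₃ne z₃ hz₃ z₁ hz₁ hz3 t ht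
        exact ⟨x, hsub hx, mem_biUnion htx hyt⟩
      · exact ⟨x₃, hx₃mem, mem_biUnion hz₃ (heq ▸ hw)⟩
      · have hm : min y₁ y₂ ∈ f z₁ := by
          rcases min_cases y₁ y₂ with ⟨he, _⟩ | ⟨he, _⟩ <;> rw [he] <;> assumption
        obtain ⟨t, ht, hyt⟩ := hif z₃ hz₃I z₁ hz₁I hz3 w hw (min y₁ y₂) hm
          (ne_of_gt (hy.1.trans hgt)) y (mem_between' hy.1 hgt)
        obtain ⟨x, hx, htx⟩ := hih x₃ hx₃I x₁ hx₁ hx₃ne z₃ hz₃ z₁ hz₁ hz3 t ht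
        exact ⟨x, hsub hx, mem_biUnion htx hyt⟩
  · obtain ⟨t, ht, hyt⟩ := hif z₁ hz₁I z₂ hz₂I hzz y₁ hyz₁ y₂ hyz₂ hy12 y hy
    obtain ⟨x, hx, htx⟩ := hih x₁ hx₁ x₂ hx₂ hx12 z₁ hz₁ z₂ hz₂ hzz t ht
    exact ⟨x, hx, mem_biUnion htx hyt⟩

lemma fIter_zero_USC (f : ℝ → Set ℝ) : USC (fIter f 0) := by
  constructor
  · intro x hx
    refine ⟨⟨x, rfl⟩, ?_, ?_⟩
    · intro v hv
      rw [show fIter f 0 x = {x} from rfl, mem_singleton_iff] at hv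
      rwa [hv]
    · exact isCompact_singleton
  · have : SVGraph (fIter f 0)
        = (Prod.fst ⁻¹' Icc (0:ℝ) 1) ∩ {p : ℝ × ℝ | p.2 = p.1} := by
      ext p
      simp [SVGraph, fIter, eq_comm]
    rw [this]
    exact (isClosed_Icc.preimage continuous_fst).inter
      (isClosed_eq continuous_snd continuous_fst)

lemma fIter_zero_IVP (f : ℝ → Set ℝ) : IVP (fIter f 0) := by
  intro x₁ hx₁ x₂ hx₂ hx12 y₁ hy₁ y₂ hy₂ hy12 y hy
  rw [show fIter f 0 x₁ = {x₁} from rfl, mem_singleton_iff] at hy₁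
  rw [show fIter f 0 x₂ = {x₂} from rfl, mem_singleton_iff] at hy₂
  subst hy₁; subst hy₂
  exact ⟨y, hy, rfl⟩

lemma fIter_USC (f : ℝ → Set ℝ) (hf : USC f) (n : ℕ) : USC (fIter f n) := by
  induction n with
  | zero => exact fIter_zero_USC f
  | succ n ih => exact comp_USC f (fIter f n) hf ih

lemma fIter_IVP (f : ℝ → Set ℝ) (hf : USC f) (hivp : IVP f) (n : ℕ) :
    IVP (fIter f n) := by
  induction n with
  | zero => exact fIter_zero_IVP f
  | succ n ih => exact comp_IVP f (fIter f n) hf (fIter_USC f hf n) hivp ih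

/-- if `f^n(y) = [c,d]` with `c < y < d`, there is a sequence
`p_i < y`, `p_i → y`, with `y ∈ f^n(p_i)` for all `i`. -/
theorem stmt19 (f : ℝ → Set ℝ) (hf : USC f) (hivp : IVP f)
    (n : ℕ) (hn : 1 ≤ n) (y : ℝ) (hy : y ∈ Ioo (0:ℝ) 1)
    (c d : ℝ) (hfy : fIter f n y = Icc c d) (hcy : c < y) (hyd : y < d) :
    ∃ p : ℕ → ℝ, (∀ i, p i < y) ∧ Tendsto p atTop (𝓝 y) ∧
      ∀ i, y ∈ fIter f n (p i) := by
  have hUSC := fIter_USC f hf n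
  have hIVP := fIter_IVP f hf hivp n
  have hyI : y ∈ Icc (0:ℝ) 1 := ⟨hy.1.le, hy.2.le⟩
  have hcd : c ≤ d := (hcy.trans hyd).le
  have hc : c ∈ fIter f n y := by rw [hfy]; exact ⟨le_refl c, hcd⟩
  have hd : d ∈ fIter f n y := by rw [hfy]; exact ⟨hcd, le_refl d⟩
  have key : ∀ i : ℕ, ∃ p, (y - 1 / (i + 1) < p ∧ p < y) ∧ y ∈ fIter f n (p) := by
    intro i
    set ε : ℝ := 1 / (i + 1) with hεdef
    have hε : 0 < ε := by positivity
    set q : ℝ := max (y - ε / 2) (y / 2) with hqdef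
    have hqy : q < y := max_lt (by linarith) (by linarith [hy.1])
    have hqI : q ∈ Icc (0:ℝ) 1 := ⟨(by linarith [hy.1] : (0:ℝ) ≤ y / 2).trans
      (le_max_right _ _), hqy.le.trans hy.2.le⟩
    have hqε : y - ε < q := lt_of_lt_of_le (by linarith) (le_max_left _ _)
    obtain ⟨w, hw⟩ := (hUSC.1 q hqI).1
    rcases lt_trichotomy w y with hlt | heq | hgt
    · obtain ⟨x, hx, hyx⟩ := hIVP q hqI y hyI (ne_of_lt hqy) w hw d hd
        (ne_of_lt (hlt.trans hyd)) y (mem_between hlt hyd)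
      rw [min_eq_left hqy.le, max_eq_right hqy.le] at hx
      exact ⟨x, ⟨hqε.trans hx.1, hx.2⟩, hyx⟩
    · exact ⟨q, ⟨hqε, hqy⟩, heq ▸ hw⟩
    · obtain ⟨x, hx, hyx⟩ := hIVP q hqI y hyI (ne_of_lt hqy) w hw c hc
        (ne_of_gt (hcy.trans hgt)) y (mem_between' hcy hgt)
      rw [min_eq_left hqy.le, max_eq_right hqy.le] at hx
      exact ⟨x, ⟨hqε.trans hx.1, hx.2⟩, hyx⟩
  choose p hp1 hp2 using key
  refine ⟨p, fun i => (hp1 i).2, ?_, hp2⟩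
  have hlow : Tendsto (fun i : ℕ => y - 1 / (i + 1 : ℝ)) atTop (𝓝 y) := by
    have := tendsto_one_div_add_atTop_nhds_zero_nat (𝕜 := ℝ)
    simpa using tendsto_const_nhds.sub this
  exact tendsto_of_tendsto_of_tendsto_of_le_of_le hlow tendsto_const_nhds
    (fun i => (hp1 i).1.le) (fun i => (hp1 i).2.le)
end
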